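/- Let π : S' → S be a continuous surjection of profinite sets. For i ≥ 0 let T_i = {(x₀,…,x_i) ∈ (S')^{i+1} : π(x₀) = π(x₁) = ⋯ = π(x_i)} with the subspace topology (so T₀ = S'), let δ_k : T_{i+1} → T_i (0 ≤ k ≤ i+1) be the map deleting the k-th coordinate, and let d_i : LC(T_i, ℤ) → LC(T_{i+1}, ℤ) be the alternating sum ∑_{k=0}^{i+1} (−1)^k δ_k^* of pullbacks, where LC(T, ℤ) denotes the group of locally constant maps T → ℤ. Then the augmented Čech complex 0 → LC(S, ℤ) → LC(T₀, ℤ) → LC(T₁, ℤ) → ⋯ is exact: the pullback π^* : LC(S,ℤ) → LC(T₀,ℤ) is injective, its image equals the kernel of d₀, and for every i ≥ 0 the image of d_i equals the kernel of d_{i+1}. -/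

import Mathlib

/-!
STATEMENT 10: For a continuous surjection `π : S' → S` of profinite sets, the augmented Čech
complex `0 → LC(S, ℤ) → LC(T₀, ℤ) → LC(T₁, ℤ) → ⋯` of locally constant `ℤ`-valued functions
is exact.
-/

universe u

variable {S' S : Type u} [TopologicalSpace S'] [TopologicalSpace S]

/-- The `i`-th term `T_i = {(x₀,…,x_i) ∈ (S')^{i+1} : π(x₀) = ⋯ = π(x_i)}` of the Čech
nerve of `π : S' → S`, topologized as a subspace of `(S')^{i+1}`. -/
def cechNerve (π : C(S', S)) (i : ℕ) : Type u :=
  {x : Fin (i + 1) → S' // ∀ k l, π (x k) = π (x l)}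

instance (π : C(S', S)) (i : ℕ) : TopologicalSpace (cechNerve π i) :=
  instTopologicalSpaceSubtype

/-- The map `δ_k : T_{i+1} → T_i` deleting the `k`-th coordinate. -/
def cechDelta (π : C(S', S)) {i : ℕ} (k : Fin (i + 2)) :
    C(cechNerve π (i + 1), cechNerve π i) where
  toFun x := ⟨fun j => x.1 (k.succAbove j), fun a b => x.2 _ _⟩
  continuous_toFun := by
    apply Continuous.subtype_mk
    exact continuous_pi fun j => (continuous_apply (k.succAbove j)).comp continuous_subtype_val

/-- The Čech differential `d_i = ∑ (−1)^k δ_k^* : LC(T_i, ℤ) → LC(T_{i+1}, ℤ)`. -/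
noncomputable def cechDifferential (π : C(S', S)) (i : ℕ) :
    LocallyConstant (cechNerve π i) ℤ → LocallyConstant (cechNerve π (i + 1)) ℤ :=
  fun f => ∑ k : Fin (i + 2), (-1 : ℤ) ^ (k : ℕ) • f.comap (cechDelta π k)

/-- The augmentation `T₀ → S`, `(x₀) ↦ π(x₀)`. -/
def cechAug (π : C(S', S)) : C(cechNerve π 0, S) where
  toFun x := π (x.1 0)
  continuous_toFun := π.continuous.comp ((continuous_apply 0).comp continuous_subtype_val)


/-! ### Auxiliary lemmas -/

section Aux

open DiscreteQuotient Function

lemma proj_rel_le {X : Type*} [TopologicalSpace X] {P Q : DiscreteQuotient X} (h : P ≤ Q) {x y : X}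
    (e : P.proj x = P.proj y) : Q.proj x = Q.proj y :=
  Quotient.sound' (h (Quotient.exact' e))

lemma ofIsClopen_mem_iff {X : Type*} [TopologicalSpace X] {V : Set X} (hV : IsClopen V) {x y : X}
    (e : (ofIsClopen hV).proj x = (ofIsClopen hV).proj y) : x ∈ V ↔ y ∈ V :=
  Quotient.exact' e

lemma succAbove_succAbove_aux {n : ℕ} {i j : Fin (n + 1)} (H : i ≤ j) (k : Fin n) :
    j.succ.succAbove (i.succAbove k) = i.castSucc.succAbove (j.succAbove k) := by
  rcases i with ⟨i, hi⟩
  rcases j with ⟨j, hj⟩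
  rcases k with ⟨k, hk⟩
  simp only [Fin.succAbove, Fin.lt_def, Fin.le_def] at *
  split_ifs <;> (apply Fin.ext) <;> simp_all [Fin.lt_def, Fin.le_def] <;> omega

lemma cechDiff_apply (π : C(S', S)) (i : ℕ) (f : LocallyConstant (cechNerve π i) ℤ)
    (x : cechNerve π (i + 1)) :
    cechDifferential π i f x =
      ∑ k : Fin (i + 2), (-1 : ℤ) ^ (k : ℕ) * f (cechDelta π k x) := by
  show (LocallyConstant.coeFnAddMonoidHom (∑ k : Fin (i + 2),
      (-1 : ℤ) ^ (k : ℕ) • f.comap (cechDelta π k))) x = _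
  rw [map_sum]
  rw [Finset.sum_apply]
  refine Finset.sum_congr rfl fun k _ => ?_
  rw [LocallyConstant.coeFnAddMonoidHom_apply, LocallyConstant.coe_smul, Pi.smul_apply,
    LocallyConstant.coe_comap, Function.comp_apply, smul_eq_mul]

instance cechNerve.compactSpace (π : C(S', S)) [CompactSpace S'] [T2Space S] (j : ℕ) :
    CompactSpace (cechNerve π j) := by
  have h : IsClosed {x : Fin (j + 1) → S' | ∀ k l, π (x k) = π (x l)} := by
    have he : {x : Fin (j + 1) → S' | ∀ k l, π (x k) = π (x l)} =
        ⋂ (k) (l), {x : Fin (j + 1) → S' | π (x k) = π (x l)} := by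
      ext x; simp [Set.mem_iInter]
    rw [he]
    exact isClosed_iInter fun k => isClosed_iInter fun l =>
      isClosed_eq (π.continuous.comp (continuous_apply k))
        (π.continuous.comp (continuous_apply l))
  exact isCompact_iff_compactSpace.mp h.isCompact

/-- Any locally constant function on the Čech nerve factors through a fine enough
discrete quotient of `S'`, coordinatewise. -/
theorem exists_fine (π : C(S', S)) [CompactSpace S'] [T2Space S'] [TotallyDisconnectedSpace S']
    [T2Space S] (j : ℕ) (f : LocallyConstant (cechNerve π j) ℤ) :
    ∃ P : DiscreteQuotient S', ∀ x y : cechNerve π j,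
      (∀ k, P.proj (x.1 k) = P.proj (y.1 k)) → f x = f y := by
  classical
  have key : ∀ x : cechNerve π j, ∃ P : DiscreteQuotient S',
      ∀ y : cechNerve π j, (∀ k, P.proj (y.1 k) = P.proj (x.1 k)) → f y = f x := by
    intro x
    have hopen : IsOpen (f ⁻¹' {f x}) := f.isLocallyConstant {f x}
    change @IsOpen _ (TopologicalSpace.induced (fun y : cechNerve π j => y.1) inferInstance) _
      at hopen
    rw [isOpen_induced_iff] at hopen
    obtain ⟨U, hU, hUf⟩ := hopen
    have hxU : x.1 ∈ U := by
      have hx : x ∈ f ⁻¹' {f x} := rfl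
      rw [← hUf] at hx; exact hx
    obtain ⟨B, hB, hxB, hBU⟩ :=
      (isTopologicalBasis_pi
        fun _ : Fin (j + 1) => isTopologicalBasis_isClopen).exists_subset_of_mem_open hxU hU
    obtain ⟨V, F, hVF, rfl⟩ := hB
    have hVc : ∀ k, IsClopen (if k ∈ F then V k else Set.univ) := by
      intro k; split_ifs with h
      · exact hVF k h
      · exact isClopen_univ
    refine ⟨Finset.univ.inf fun k : Fin (j + 1) => DiscreteQuotient.ofIsClopen (hVc k), ?_⟩
    intro y hy
    have hyB : y.1 ∈ (F : Set (Fin (j + 1))).pi V := by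
      intro k hk
      have hle : (Finset.univ.inf fun k : Fin (j + 1) => DiscreteQuotient.ofIsClopen (hVc k)) ≤
          DiscreteQuotient.ofIsClopen (hVc k) := Finset.inf_le (Finset.mem_univ k)
      have hmem := ofIsClopen_mem_iff (hVc k) (proj_rel_le hle (hy k))
      rw [if_pos (Finset.mem_coe.mp hk)] at hmem
      exact hmem.mpr (hxB k hk)
    have : y ∈ f ⁻¹' {f x} := by rw [← hUf]; exact hBU hyB
    exact this
  choose Px hPx using key
  set O : cechNerve π j → Set (cechNerve π j) :=
    fun x => {y | ∀ k, (Px x).proj (y.1 k) = (Px x).proj (x.1 k)} with hO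
  have hOopen : ∀ x, IsOpen (O x) := by
    intro x
    have he : O x = ⋂ k, (fun y : cechNerve π j => (Px x).proj (y.1 k)) ⁻¹'
        {(Px x).proj (x.1 k)} := by
      ext y; simp [hO, Set.mem_iInter]
    rw [he]
    exact isOpen_iInter_of_finite fun k => IsOpen.preimage
      ((Px x).proj_continuous.comp ((continuous_apply k).comp continuous_subtype_val))
      (isOpen_discrete _)
  have hcov : (Set.univ : Set (cechNerve π j)) ⊆ ⋃ x, O x :=
    fun y _ => Set.mem_iUnion.mpr ⟨y, fun k => rfl⟩
  obtain ⟨t, ht⟩ := isCompact_univ.elim_finite_subcover O hOopen hcov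
  refine ⟨t.inf Px, fun x y hxy => ?_⟩
  obtain ⟨x₀, hx₀t, hxO⟩ := Set.mem_iUnion₂.mp (ht (Set.mem_univ x))
  have h1 : f x = f x₀ := hPx x₀ x hxO
  have hyO : y ∈ O x₀ := by
    intro k
    exact (proj_rel_le (Finset.inf_le hx₀t) (hxy k)).symm.trans (hxO k)
  exact h1.trans (hPx x₀ y hyO).symm

/-- If a tuple of classes in a discrete quotient of `S'` cannot be lifted to a point of the
Čech nerve, then a fine enough discrete quotient of `S` witnesses this. -/
theorem exists_kill (π : C(S', S)) [CompactSpace S'] [CompactSpace S] [T2Space S]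
    [TotallyDisconnectedSpace S] (m : ℕ) (P : DiscreteQuotient S') (a : Fin (m + 1) → P)
    (hna : ¬ ∃ x : cechNerve π m, ∀ k, P.proj (x.1 k) = a k) :
    ∃ R : DiscreteQuotient S, ∀ y : Fin (m + 1) → S',
      (∀ k l, R.proj (π (y k)) = R.proj (π (y l))) → ∃ k, P.proj (y k) ≠ a k := by
  classical
  set K : Fin (m + 1) → Set S := fun k => π '' (P.proj ⁻¹' {a k}) with hK
  have hKc : ∀ k, IsClosed (K k) := fun k =>
    (((P.isClopen_preimage {a k}).isClosed.isCompact).image π.continuous).isClosed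
  have hint : ∀ s : S, ∃ W : Set S, IsClopen W ∧ s ∈ W ∧ ∃ k, W ∩ K k = ∅ := by
    intro s
    have hex : ∃ k, s ∉ K k := by
      by_contra hcon; push_neg at hcon
      apply hna
      have hx : ∀ k, ∃ x' : S', P.proj x' = a k ∧ π x' = s := by
        intro k
        obtain ⟨x', hx', he⟩ := hcon k
        exact ⟨x', hx', he⟩
      choose w hw1 hw2 using hx
      exact ⟨⟨w, fun k l => by rw [hw2, hw2]⟩, hw1⟩
    obtain ⟨k, hk⟩ := hex
    obtain ⟨W, hW, hsW, hWsub⟩ :=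
      compact_exists_isClopen_in_isOpen (hKc k).isOpen_compl hk
    refine ⟨W, hW, hsW, k, ?_⟩
    rw [Set.eq_empty_iff_forall_notMem]
    rintro t ⟨h1, h2⟩
    exact hWsub h1 h2
  choose W hW hsW kk hWK using hint
  have hcov : (Set.univ : Set S) ⊆ ⋃ s, W s := fun s _ => Set.mem_iUnion.mpr ⟨s, hsW s⟩
  obtain ⟨t, ht⟩ := isCompact_univ.elim_finite_subcover W (fun s => (hW s).isOpen) hcov
  refine ⟨t.inf fun s => DiscreteQuotient.ofIsClopen (hW s), fun y hy => ?_⟩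
  by_contra hcon; push_neg at hcon
  obtain ⟨s₀, hs₀t, hy0⟩ := Set.mem_iUnion₂.mp (ht (Set.mem_univ (π (y 0))))
  have hall : ∀ l, π (y l) ∈ W s₀ := fun l =>
    (ofIsClopen_mem_iff (hW s₀) (proj_rel_le (Finset.inf_le hs₀t) (hy l 0))).mpr hy0
  have hmemK : π (y (kk s₀)) ∈ K (kk s₀) := ⟨y (kk s₀), by simp [hcon (kk s₀)], rfl⟩
  have : π (y (kk s₀)) ∈ W s₀ ∩ K (kk s₀) := ⟨hall (kk s₀), hmemK⟩
  rw [hWK s₀] at this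
  exact this

/-- The combinatorial contracting-homotopy computation at a finite level. -/
theorem homotopy_step {A B : Type*} (α : A → B) (σ : B → A) (hσ : ∀ b, α (σ b) = b)
    (m : ℕ) (F : (Fin (m + 2) → A) → ℤ)
    (hd : ∀ b : Fin (m + 3) → A, (∀ k l, α (b k) = α (b l)) →
      ∑ k : Fin (m + 3), (-1 : ℤ) ^ (k : ℕ) * F (b ∘ k.succAbove) = 0)
    (a : Fin (m + 2) → A) (ha : ∀ k l, α (a k) = α (a l)) :
    ∑ k : Fin (m + 2), (-1 : ℤ) ^ (k : ℕ) *
      F (Fin.cons (σ (α ((a ∘ k.succAbove) 0))) (a ∘ k.succAbove)) = F a := by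
  set b : Fin (m + 3) → A := Fin.cons (σ (α (a 0))) a with hb
  have hbnc : ∀ k l, α (b k) = α (b l) := by
    have h0 : ∀ k, α (b k) = α (a 0) := by
      intro k
      refine Fin.cases ?_ (fun k' => ?_) k
      · rw [hb, Fin.cons_zero, hσ]
      · rw [hb, Fin.cons_succ]; exact ha k' 0
    intro k l; rw [h0 k, h0 l]
  have h := hd b hbnc
  rw [Fin.sum_univ_succ] at h
  have hb0 : b ∘ (0 : Fin (m + 3)).succAbove = a := by
    funext j; simp [hb, Fin.zero_succAbove, Fin.cons_succ]
  rw [hb0] at h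
  simp only [Fin.val_zero, pow_zero, one_mul] at h
  have hbk : ∀ k : Fin (m + 2),
      b ∘ (k.succ).succAbove = Fin.cons (σ (α (a 0))) (a ∘ k.succAbove) := by
    intro k
    funext j
    refine Fin.cases ?_ (fun j' => ?_) j
    · simp [hb, Fin.succ_succAbove_zero, Fin.cons_zero]
    · simp [hb, Fin.succ_succAbove_succ, Fin.cons_succ]
  have hsum : ∑ k : Fin (m + 2), (-1 : ℤ) ^ ((k.succ : Fin (m + 3)) : ℕ) * F (b ∘ (k.succ).succAbove)
      = ∑ k : Fin (m + 2), -((-1 : ℤ) ^ (k : ℕ) *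
        F (Fin.cons (σ (α (a 0))) (a ∘ k.succAbove))) := by
    refine Finset.sum_congr rfl fun k _ => ?_
    rw [hbk k, Fin.val_succ, pow_succ]
    ring
  rw [hsum, Finset.sum_neg_distrib] at h
  have h2 : ∑ k : Fin (m + 2), (-1 : ℤ) ^ (k : ℕ) *
      F (Fin.cons (σ (α (a 0))) (a ∘ k.succAbove)) = F a := by linarith
  rw [← h2]
  refine Finset.sum_congr rfl fun k _ => ?_
  simp only [Function.comp_apply]
  rw [ha (k.succAbove 0) 0]

/-- Double alternating sum over deleted coordinates vanishes. -/
theorem dd_aux {A : Type*} (m : ℕ) (G : (Fin (m + 1) → A) → ℤ) (x : Fin (m + 3) → A) :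
    ∑ k : Fin (m + 3), ∑ l : Fin (m + 2),
      (-1 : ℤ) ^ ((k : ℕ) + (l : ℕ)) * G (x ∘ k.succAbove ∘ l.succAbove) = 0 := by
  classical
  rw [← Finset.sum_product']
  refine Finset.sum_ninvolution
    (fun p => if h : (p.1 : ℕ) ≤ (p.2 : ℕ) then
        (p.2.succ, p.1.castLT (by omega))
      else
        (p.2.castSucc, p.1.pred (by
          refine fun h0 => h ?_
          rw [h0]
          simp)))
    ?_ ?_ (fun p => Finset.mem_product.mpr ⟨Finset.mem_univ _, Finset.mem_univ _⟩) ?_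
  · rintro ⟨k, l⟩
    dsimp only
    by_cases h : (k : ℕ) ≤ (l : ℕ)
    · rw [dif_pos h]
      have hcast : (k.castLT (by omega : (k : ℕ) < m + 2)).castSucc = k := Fin.ext rfl
      have hcomp : x ∘ k.succAbove ∘ l.succAbove =
          x ∘ (l.succ).succAbove ∘ (k.castLT (by omega)).succAbove := by
        funext t
        simp only [Function.comp_apply]
        rw [succAbove_succAbove_aux (by simpa [Fin.le_def] using h) t, hcast]
      have hs : ((l.succ : Fin (m + 3)) : ℕ) + ((k.castLT (by omega) : Fin (m + 2)) : ℕ)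
          = ((k : ℕ) + (l : ℕ)) + 1 := by
        simp [Fin.val_succ]
        omega
      rw [hcomp, hs, pow_succ]
      ring
    · rw [dif_neg h]
      push_neg at h
      have hne : k ≠ 0 := by
        refine fun h0 => ?_
        rw [h0] at h
        simp at h
      have hsp : (k.pred hne).succ = k := Fin.succ_pred _ _
      have hcomp : x ∘ k.succAbove ∘ l.succAbove =
          x ∘ (l.castSucc).succAbove ∘ (k.pred hne).succAbove := by
        funext t
        simp only [Function.comp_apply]
        rw [← succAbove_succAbove_aux
          (i := l) (j := k.pred hne) (by simp [Fin.le_def, Fin.coe_pred]; omega) t, hsp]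
      have hs : (k : ℕ) + (l : ℕ) = (((l.castSucc : Fin (m + 3)) : ℕ)
          + ((k.pred hne : Fin (m + 2)) : ℕ)) + 1 := by
        simp [Fin.coe_castSucc, Fin.coe_pred]
        omega
      rw [hcomp, hs, pow_succ]
      ring
  · rintro ⟨k, l⟩ -
    dsimp only
    by_cases h : (k : ℕ) ≤ (l : ℕ)
    · rw [dif_pos h]
      intro he
      have := congrArg (fun q : Fin (m + 3) × Fin (m + 2) => (q.1 : ℕ)) he
      simp [Fin.val_succ] at this
      omega
    · rw [dif_neg h]
      intro he
      have := congrArg (fun q : Fin (m + 3) × Fin (m + 2) => (q.1 : ℕ)) he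
      simp [Fin.coe_castSucc] at this
      omega
  · rintro ⟨k, l⟩
    dsimp only
    by_cases h : (k : ℕ) ≤ (l : ℕ)
    · rw [dif_pos h]
      rw [dif_neg (by simp [Fin.val_succ]; omega)]
      refine Prod.ext ?_ ?_
      · exact Fin.ext rfl
      · apply Fin.ext
        simp [Fin.coe_pred, Fin.val_succ]
    · rw [dif_neg h]
      push_neg at h
      rw [dif_pos (by simp [Fin.coe_castSucc, Fin.coe_pred]; omega)]
      refine Prod.ext ?_ ?_
      · apply Fin.ext
        simp [Fin.val_succ, Fin.coe_pred]
      · exact Fin.ext rfl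

/-- `d ∘ d = 0`. -/
theorem cechDifferential_comp (π : C(S', S)) (i : ℕ) (g : LocallyConstant (cechNerve π i) ℤ) :
    cechDifferential π (i + 1) (cechDifferential π i g) = 0 := by
  classical
  ext x
  rw [cechDiff_apply]
  set G : (Fin (i + 1) → S') → ℤ := fun u =>
    if h : ∀ k l, π (u k) = π (u l) then g ⟨u, h⟩ else 0 with hG
  have hGg : ∀ z : cechNerve π i, G z.1 = g z := fun z => dif_pos z.2
  have hterm : ∀ (k : Fin (i + 3)) (l : Fin (i + 2)),
      g (cechDelta π l (cechDelta π k x)) = G (x.1 ∘ k.succAbove ∘ l.succAbove) := by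
    intro k l
    rw [← hGg]
    rfl
  have : ∑ k : Fin (i + 3), (-1 : ℤ) ^ (k : ℕ) * (cechDifferential π i g) (cechDelta π k x)
      = ∑ k : Fin (i + 3), ∑ l : Fin (i + 2),
        (-1 : ℤ) ^ ((k : ℕ) + (l : ℕ)) * G (x.1 ∘ k.succAbove ∘ l.succAbove) := by
    refine Finset.sum_congr rfl fun k _ => ?_
    rw [cechDiff_apply, Finset.mul_sum]
    refine Finset.sum_congr rfl fun l _ => ?_
    rw [hterm k l, pow_add]
    ring
  rw [this, dd_aux i G x.1]
  simp

end Aux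

open Topology

theorem cech_complex_locallyConstant_exact
    [CompactSpace S'] [T2Space S'] [TotallyDisconnectedSpace S']
    [CompactSpace S] [T2Space S] [TotallyDisconnectedSpace S]
    (π : C(S', S)) (hπ : Function.Surjective π) :
    Function.Injective (fun g : LocallyConstant S ℤ => g.comap (cechAug π)) ∧
    Set.range (fun g : LocallyConstant S ℤ => g.comap (cechAug π)) =
      {f | cechDifferential π 0 f = 0} ∧
    ∀ i : ℕ, Set.range (cechDifferential π i) = {f | cechDifferential π (i + 1) f = 0} := by
  classical
  refine ⟨?_, ?_, ?_⟩
  · -- injectivity of the augmentation pullback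
    intro g g' h
    ext s
    obtain ⟨x0, rfl⟩ := hπ s
    have h2 := congrArg
      (fun F : LocallyConstant (cechNerve π 0) ℤ =>
        F ⟨fun _ => x0, fun k l => rfl⟩) h
    exact h2
  · -- exactness at degree 0
    ext f
    simp only [Set.mem_range, Set.mem_setOf_eq]
    constructor
    · rintro ⟨g, rfl⟩
      ext x
      rw [cechDiff_apply, Fin.sum_univ_two]
      have hx : π (x.1 ((0 : Fin 2).succAbove 0)) = π (x.1 ((1 : Fin 2).succAbove 0)) :=
        x.2 _ _
      show (-1 : ℤ) ^ ((0 : Fin 2) : ℕ) *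
          g ((cechAug π) (cechDelta π 0 x)) + (-1 : ℤ) ^ ((1 : Fin 2) : ℕ) *
          g ((cechAug π) (cechDelta π 1 x)) = (0 : LocallyConstant (cechNerve π 1) ℤ) x
      show (-1 : ℤ) ^ ((0 : Fin 2) : ℕ) * g (π (x.1 ((0 : Fin 2).succAbove 0))) +
        (-1 : ℤ) ^ ((1 : Fin 2) : ℕ) * g (π (x.1 ((1 : Fin 2).succAbove 0))) = 0
      rw [hx]
      simp
    · intro hf
      have hconst : ∀ x y : cechNerve π 0, π (x.1 0) = π (y.1 0) → f x = f y := by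
        intro x y hxy
        have hz : ∀ k l : Fin 2,
            π ((fun j : Fin 2 => if j = 0 then x.1 0 else y.1 0) k) =
            π ((fun j : Fin 2 => if j = 0 then x.1 0 else y.1 0) l) := by
          intro k l
          by_cases hk : k = 0 <;> by_cases hl : l = 0 <;> simp [hk, hl, hxy]
        set z : cechNerve π 1 := ⟨_, hz⟩ with hzdef
        have h0 : cechDifferential π 0 f z = 0 := by rw [hf]; rfl
        rw [cechDiff_apply, Fin.sum_univ_two] at h0
        have e0 : cechDelta π 0 z = y := by
          apply Subtype.ext
          funext j
          have hj : j = 0 := Fin.eq_zero j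
          subst hj
          show (if ((0 : Fin 2).succAbove 0) = 0 then x.1 0 else y.1 0) = y.1 0
          have : ((0 : Fin 2).succAbove 0) = 1 := by decide
          rw [this]
          simp
        have e1 : cechDelta π 1 z = x := by
          apply Subtype.ext
          funext j
          have hj : j = 0 := Fin.eq_zero j
          subst hj
          show (if ((1 : Fin 2).succAbove 0) = 0 then x.1 0 else y.1 0) = x.1 0
          have : ((1 : Fin 2).succAbove 0) = 0 := by decide
          rw [this]
          simp
        rw [e0, e1] at h0
        simp at h0
        linarith
      have hgc : ∀ (y : S') (x : cechNerve π 0), π (x.1 0) = π y →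
          f ⟨fun _ => y, fun k l => rfl⟩ = f x := by
        intro y x hx
        exact hconst _ x hx.symm
      set g0 : S → ℤ := fun s => f ⟨fun _ => Function.surjInv hπ s, fun k l => rfl⟩ with hg0def
      have hg0 : ∀ x : cechNerve π 0, g0 (π (x.1 0)) = f x := by
        intro x
        exact hgc _ x (by rw [Function.surjInv_eq hπ])
      have hq : IsQuotientMap π := (π.continuous.isClosedMap).isQuotientMap π.continuous hπ
      have hcont : Continuous (g0 ∘ π) := by
        have he : g0 ∘ π = fun y => f ⟨fun _ => y, fun k l => rfl⟩ := by
          funext y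
          exact hgc (Function.surjInv hπ (π y)) ⟨fun _ => y, fun k l => rfl⟩
            (by rw [Function.surjInv_eq hπ])
        rw [he]
        exact f.continuous.comp
          (Continuous.subtype_mk (continuous_pi fun _ => continuous_id) _)
      have hg0c : Continuous g0 := hq.continuous_iff.mpr hcont
      refine ⟨⟨g0, (IsLocallyConstant.iff_continuous g0).mpr hg0c⟩, ?_⟩
      ext x
      exact hg0 x
  · -- exactness in higher degrees
    intro i
    ext f
    simp only [Set.mem_range, Set.mem_setOf_eq]
    constructor
    · rintro ⟨g, rfl⟩
      exact cechDifferential_comp π i g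
    · intro hf
      obtain ⟨P, hP⟩ := exists_fine π (i + 1) f
      haveI : Fintype P := Fintype.ofFinite P
      have hkill : ∀ a : Fin (i + 3) → P, ∃ R : DiscreteQuotient S,
          (¬ ∃ x : cechNerve π (i + 2), ∀ k, P.proj (x.1 k) = a k) →
          ∀ y : Fin (i + 3) → S', (∀ k l, R.proj (π (y k)) = R.proj (π (y l))) →
            ∃ k, P.proj (y k) ≠ a k := by
        intro a
        by_cases h : ∃ x : cechNerve π (i + 2), ∀ k, P.proj (x.1 k) = a k
        · exact ⟨⊤, fun hcon => absurd h hcon⟩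
        · obtain ⟨R, hR⟩ := exists_kill π (i + 2) P a h
          exact ⟨R, fun _ => hR⟩
      choose Ra hRa using hkill
      set R : DiscreteQuotient S := Finset.univ.inf Ra with hRdef
      have hbeta : ∀ y : Fin (i + 3) → S',
          (∀ k l, R.proj (π (y k)) = R.proj (π (y l))) →
          ∃ x : cechNerve π (i + 2), ∀ k, P.proj (x.1 k) = P.proj (y k) := by
        intro y hy
        by_contra hcon
        obtain ⟨k, hk⟩ := hRa (fun k => P.proj (y k)) hcon y
          (fun k l => proj_rel_le (Finset.inf_le (Finset.mem_univ _)) (hy k l))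
        exact hk rfl
      set P' : DiscreteQuotient S' := P ⊓ R.comap π with hP'def
      have h1 : P' ≤ P := inf_le_left
      have hle : DiscreteQuotient.LEComap π P' R := inf_le_right
      set α : P' → R := DiscreteQuotient.map π hle with hα
      have hαs : Function.Surjective α := by
        intro b
        obtain ⟨s, rfl⟩ := R.proj_surjective b
        obtain ⟨w, rfl⟩ := hπ s
        exact ⟨P'.proj w, rfl⟩
      set σ : R → P' := Function.surjInv hαs with hσdef
      have hσ : ∀ b, α (σ b) = b := fun b => Function.surjInv_eq hαs b
      set F : (Fin (i + 2) → P) → ℤ := fun c =>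
        if h : ∃ x : cechNerve π (i + 1), ∀ k, P.proj (x.1 k) = c k then f h.choose else 0
        with hFdef
      have hF : ∀ (x : cechNerve π (i + 1)) (c : Fin (i + 2) → P),
          (∀ k, P.proj (x.1 k) = c k) → F c = f x := by
        intro x c hc
        have hex : ∃ x : cechNerve π (i + 1), ∀ k, P.proj (x.1 k) = c k := ⟨x, hc⟩
        have h1' : F c = f hex.choose := dif_pos hex
        rw [h1']
        exact hP _ _ fun k => (hex.choose_spec k).trans (hc k).symm
      set Ft : (Fin (i + 2) → P') → ℤ := fun c => F (DiscreteQuotient.ofLE h1 ∘ c) with hFt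
      have hd : ∀ b : Fin (i + 3) → P', (∀ k l, α (b k) = α (b l)) →
          ∑ k : Fin (i + 3), (-1 : ℤ) ^ (k : ℕ) * Ft (b ∘ k.succAbove) = 0 := by
        intro b hb
        set y : Fin (i + 3) → S' := fun k => (P'.proj_surjective (b k)).choose with hy
        have hyb : ∀ k, P'.proj (y k) = b k := fun k => (P'.proj_surjective (b k)).choose_spec
        have hyR : ∀ k l, R.proj (π (y k)) = R.proj (π (y l)) := by
          intro k l
          have hk : R.proj (π (y k)) = α (b k) := by rw [← hyb k]; rfl
          have hl : R.proj (π (y l)) = α (b l) := by rw [← hyb l]; rfl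
          rw [hk, hl, hb k l]
        obtain ⟨x, hx⟩ := hbeta y hyR
        have hxb : ∀ k, P.proj (x.1 k) = DiscreteQuotient.ofLE h1 (b k) := by
          intro k
          rw [hx k, ← hyb k, DiscreteQuotient.ofLE_proj]
        have hterm : ∀ k : Fin (i + 3), Ft (b ∘ k.succAbove) = f (cechDelta π k x) := by
          intro k
          apply hF
          intro j
          exact hxb (k.succAbove j)
        rw [Finset.sum_congr rfl fun k _ => by rw [hterm k]]
        have h0 : cechDifferential π (i + 1) f x = 0 := by rw [hf]; rfl
        rw [cechDiff_apply] at h0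
        exact h0
      set G : (Fin (i + 1) → P') → ℤ := fun c => Ft (Fin.cons (σ (α (c 0))) c) with hG
      have hlc : IsLocallyConstant
          (fun x : cechNerve π i => (fun k : Fin (i + 1) => P'.proj (x.1 k))) := by
        rw [IsLocallyConstant.iff_continuous]
        exact continuous_pi fun k =>
          P'.proj_continuous.comp ((continuous_apply k).comp continuous_subtype_val)
      set g : LocallyConstant (cechNerve π i) ℤ :=
        ⟨fun x => G (fun k => P'.proj (x.1 k)), hlc.comp G⟩ with hgdef
      refine ⟨g, ?_⟩
      ext x
      rw [cechDiff_apply]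
      set a : Fin (i + 2) → P' := fun k => P'.proj (x.1 k) with ha
      have hnc : ∀ k l, α (a k) = α (a l) := by
        intro k l
        show R.proj (π (x.1 k)) = R.proj (π (x.1 l))
        exact congrArg R.proj (x.2 k l)
      have hstep := homotopy_step α σ hσ i Ft hd a hnc
      have hterm : ∀ k : Fin (i + 2), g (cechDelta π k x) =
          Ft (Fin.cons (σ (α ((a ∘ k.succAbove) 0))) (a ∘ k.succAbove)) := by
        intro k
        rfl
      rw [Finset.sum_congr rfl fun k _ => by rw [hterm k]]
      rw [hstep]
      exact hF x _ fun k => (DiscreteQuotient.ofLE_proj h1 (x.1 k)).symm
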